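/- Fix an integer N ≥ 3 and positive reals a11, a12, a21, a22 with a12 < a21 and (N² − N − 1)·max(a11 − a21, a12 − a22, a11 − a22) < a21 − a12. Define φ1(z) := (a11 − a12)·z/N + a12 and φ2(z) := (a22 − a21)·z/N + a21 for integers 0 ≤ z ≤ N, and set M+ := max_{0 ≤ z ≤ N} φ1(z), M− := max_{0 ≤ z ≤ N−1} φ1(z), m− := min_{0 ≤ z ≤ N} φ2(z), m+ := min_{0 ≤ z ≤ N−1} φ2(z). Then (N−1)·m+ > (N−2)·M+ + M− and (N−1)·M− < (N−2)·m− + m+. -/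

import Mathlib

set_option maxHeartbeats 1000000


/-- Lemma 3.3: if `a12 < a21` and `(N² − N − 1)·max(a11 − a21, a12 − a22, a11 − a22)
< a21 − a12`, then the extremal payoffs `M₊ = max_{0≤z≤N} φ₁(z)`,
`M₋ = max_{0≤z≤N−1} φ₁(z)`, `m₋ = min_{0≤z≤N} φ₂(z)`, `m₊ = min_{0≤z≤N−1} φ₂(z)`
satisfy the sufficient conditions `(N−1)m₊ > (N−2)M₊ + M₋` and
`(N−1)M₋ < (N−2)m₋ + m₊` of Lemma 3.2. -/
theorem deathbirth_payoff_extrema_condition (N : ℕ) (hN : 3 ≤ N)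
    (a11 a12 a21 a22 : ℝ)
    (h11 : 0 < a11) (h12 : 0 < a12) (h21 : 0 < a21) (h22 : 0 < a22)
    (hlt : a12 < a21)
    (hcond : ((N : ℝ) ^ 2 - N - 1) * max (a11 - a21) (max (a12 - a22) (a11 - a22))
      < a21 - a12)
    (Mp Mm mm mp : ℝ)
    (hMp : IsGreatest ((fun z : ℕ => (a11 - a12) * z / N + a12) '' {z | z ≤ N}) Mp)
    (hMm : IsGreatest ((fun z : ℕ => (a11 - a12) * z / N + a12) '' {z | z ≤ N - 1}) Mm)
    (hmm : IsLeast ((fun z : ℕ => (a22 - a21) * z / N + a21) '' {z | z ≤ N}) mm)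
    (hmp : IsLeast ((fun z : ℕ => (a22 - a21) * z / N + a21) '' {z | z ≤ N - 1}) mp) :
    ((N : ℝ) - 1) * mp > ((N : ℝ) - 2) * Mp + Mm ∧
    ((N : ℝ) - 1) * Mm < ((N : ℝ) - 2) * mm + mp := by
  have hn3 : (3 : ℝ) ≤ (N : ℝ) := by exact_mod_cast hN
  have hn : (0 : ℝ) < (N : ℝ) := by linarith
  obtain ⟨z1, hz1, e1⟩ := hMp.1
  obtain ⟨z2, hz2, e2⟩ := hMm.1
  obtain ⟨z3, hz3, e3⟩ := hmm.1
  obtain ⟨z4, hz4, e4⟩ := hmp.1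
  simp only [Set.mem_setOf_eq] at hz1 hz2 hz3 hz4
  set n : ℝ := (N : ℝ) with hndef
  have b1 : (z1 : ℝ) ≤ n := by rw [hndef]; exact_mod_cast hz1
  have b2 : (z2 : ℝ) ≤ n - 1 := by
    have : (z2 : ℝ) ≤ ((N - 1 : ℕ) : ℝ) := by exact_mod_cast hz2
    rwa [Nat.cast_sub (by omega), Nat.cast_one] at this
  have b3 : (z3 : ℝ) ≤ n := by rw [hndef]; exact_mod_cast hz3
  have b4 : (z4 : ℝ) ≤ n - 1 := by
    have : (z4 : ℝ) ≤ ((N - 1 : ℕ) : ℝ) := by exact_mod_cast hz4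
    rwa [Nat.cast_sub (by omega), Nat.cast_one] at this
  have p1 : (0 : ℝ) ≤ (z1 : ℝ) := Nat.cast_nonneg _
  have p2 : (0 : ℝ) ≤ (z2 : ℝ) := Nat.cast_nonneg _
  have p3 : (0 : ℝ) ≤ (z3 : ℝ) := Nat.cast_nonneg _
  have p4 : (0 : ℝ) ≤ (z4 : ℝ) := Nat.cast_nonneg _
  subst e1 e2 e3 e4
  simp only at *
  have hK : (0 : ℝ) < n ^ 2 - n - 1 := by nlinarith
  have h1 : (n ^ 2 - n - 1) * (a11 - a21) < a21 - a12 :=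
    lt_of_le_of_lt (mul_le_mul_of_nonneg_left (le_max_left _ _) hK.le) hcond
  have h2 : (n ^ 2 - n - 1) * (a12 - a22) < a21 - a12 :=
    lt_of_le_of_lt (mul_le_mul_of_nonneg_left
      (le_trans (le_max_left _ _) (le_max_right _ _)) hK.le) hcond
  have h3 : (n ^ 2 - n - 1) * (a11 - a22) < a21 - a12 :=
    lt_of_le_of_lt (mul_le_mul_of_nonneg_left
      (le_trans (le_max_right _ _) (le_max_right _ _)) hK.le) hcond
  have hn2 : (0 : ℝ) ≤ n - 2 := by linarith
  have hn1 : (0 : ℝ) ≤ n - 1 := by linarith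
  constructor
  · -- first inequality
    rw [gt_iff_lt]
    have hG2 : 0 < (n - 1) * ((a22 - a21) * z4 + a21 * n) -
        ((n - 2) * ((a11 - a12) * z1 + a12 * n) + ((a11 - a12) * z2 + a12 * n)) := by
      have hG : 0 < (n ^ 2 - n - 1) * ((n - 1) * ((a22 - a21) * z4 + a21 * n) -
          ((n - 2) * ((a11 - a12) * z1 + a12 * n) + ((a11 - a12) * z2 + a12 * n))) := by
        rcases le_or_gt a12 a11 with c1 | c1 <;> rcases le_or_gt a22 a21 with c2 | c2
        · -- A: K*G = K*f1 + K*f2 + K*f4 + (n-2)*X1 + (n-1)^2*X3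
          have q1 : 0 ≤ (n ^ 2 - n - 1) * ((n - 2) * ((a11 - a12) * (n - z1))) :=
            mul_nonneg hK.le (mul_nonneg hn2 (mul_nonneg (by linarith) (by linarith)))
          have q2 : 0 ≤ (n ^ 2 - n - 1) * ((a11 - a12) * ((n - 1) - z2)) :=
            mul_nonneg hK.le (mul_nonneg (by linarith) (by linarith))
          have q4 : 0 ≤ (n ^ 2 - n - 1) * ((n - 1) * ((a21 - a22) * ((n - 1) - z4))) :=
            mul_nonneg hK.le (mul_nonneg hn1 (mul_nonneg (by linarith) (by linarith)))
          have s1 : 0 < (n - 2) * ((a21 - a12) - (n ^ 2 - n - 1) * (a11 - a21)) :=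
            mul_pos (by linarith) (by linarith)
          have s3 : 0 < (n - 1) ^ 2 * ((a21 - a12) - (n ^ 2 - n - 1) * (a11 - a22)) :=
            mul_pos (by nlinarith) (by linarith)
          linarith [q1, q2, q4, s1, s3]
        · -- B: K*G = K*f1 + K*f2 + K*f4'' + K*X1
          have q1 : 0 ≤ (n ^ 2 - n - 1) * ((n - 2) * ((a11 - a12) * (n - z1))) :=
            mul_nonneg hK.le (mul_nonneg hn2 (mul_nonneg (by linarith) (by linarith)))
          have q2 : 0 ≤ (n ^ 2 - n - 1) * ((a11 - a12) * ((n - 1) - z2)) :=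
            mul_nonneg hK.le (mul_nonneg (by linarith) (by linarith))
          have q4 : 0 ≤ (n ^ 2 - n - 1) * ((n - 1) * ((a22 - a21) * z4)) :=
            mul_nonneg hK.le (mul_nonneg hn1 (mul_nonneg (by linarith) p4))
          have s1 : 0 < (n ^ 2 - n - 1) * ((a21 - a12) - (n ^ 2 - n - 1) * (a11 - a21)) :=
            mul_pos hK (by linarith)
          linarith [q1, q2, q4, s1]
        · -- C: K*G = K*f1'' + K*f2'' + K*f4 + (n-1)^2*X2 + n(n-1)(n-2)*d
          have q1 : 0 ≤ (n ^ 2 - n - 1) * ((n - 2) * ((a12 - a11) * z1)) :=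
            mul_nonneg hK.le (mul_nonneg hn2 (mul_nonneg (by linarith) p1))
          have q2 : 0 ≤ (n ^ 2 - n - 1) * ((a12 - a11) * z2) :=
            mul_nonneg hK.le (mul_nonneg (by linarith) p2)
          have q4 : 0 ≤ (n ^ 2 - n - 1) * ((n - 1) * ((a21 - a22) * ((n - 1) - z4))) :=
            mul_nonneg hK.le (mul_nonneg hn1 (mul_nonneg (by linarith) (by linarith)))
          have s2 : 0 < (n - 1) ^ 2 * ((a21 - a12) - (n ^ 2 - n - 1) * (a12 - a22)) :=
            mul_pos (by nlinarith) (by linarith)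
          have sd : 0 < n * (n - 1) * (n - 2) * (a21 - a12) :=
            mul_pos (mul_pos (mul_pos hn (by linarith)) (by linarith)) (by linarith)
          linarith [q1, q2, q4, s2, sd]
        · -- D: K*G = K*f1'' + K*f2'' + K*f4'' + K*n(n-1)*d
          have q1 : 0 ≤ (n ^ 2 - n - 1) * ((n - 2) * ((a12 - a11) * z1)) :=
            mul_nonneg hK.le (mul_nonneg hn2 (mul_nonneg (by linarith) p1))
          have q2 : 0 ≤ (n ^ 2 - n - 1) * ((a12 - a11) * z2) :=
            mul_nonneg hK.le (mul_nonneg (by linarith) p2)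
          have q4 : 0 ≤ (n ^ 2 - n - 1) * ((n - 1) * ((a22 - a21) * z4)) :=
            mul_nonneg hK.le (mul_nonneg hn1 (mul_nonneg (by linarith) p4))
          have sd : 0 < (n ^ 2 - n - 1) * (n * (n - 1) * (a21 - a12)) :=
            mul_pos hK (mul_pos (mul_pos hn (by linarith)) (by linarith))
          linarith [q1, q2, q4, sd]
      have hdiv : (n - 1) * ((a22 - a21) * z4 + a21 * n) -
          ((n - 2) * ((a11 - a12) * z1 + a12 * n) + ((a11 - a12) * z2 + a12 * n)) =
          (n ^ 2 - n - 1) * ((n - 1) * ((a22 - a21) * z4 + a21 * n) -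
          ((n - 2) * ((a11 - a12) * z1 + a12 * n) + ((a11 - a12) * z2 + a12 * n))) /
          (n ^ 2 - n - 1) := by rw [mul_div_cancel_left₀ _ hK.ne']
      rw [hdiv]; exact div_pos hG hK
    have h5 : (n - 1) * ((a22 - a21) * z4 / n + a21) -
        ((n - 2) * ((a11 - a12) * z1 / n + a12) + ((a11 - a12) * z2 / n + a12)) =
        ((n - 1) * ((a22 - a21) * z4 + a21 * n) -
        ((n - 2) * ((a11 - a12) * z1 + a12 * n) + ((a11 - a12) * z2 + a12 * n))) / n := by
      field_simp
    have h6 := div_pos hG2 hn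
    rw [← h5] at h6
    linarith
  · -- second inequality
    have hG2 : 0 < (n - 2) * ((a22 - a21) * z3 + a21 * n) + ((a22 - a21) * z4 + a21 * n) -
        (n - 1) * ((a11 - a12) * z2 + a12 * n) := by
      have hG : 0 < (n ^ 2 - n - 1) *
          ((n - 2) * ((a22 - a21) * z3 + a21 * n) + ((a22 - a21) * z4 + a21 * n) -
          (n - 1) * ((a11 - a12) * z2 + a12 * n)) := by
        rcases le_or_gt a12 a11 with c1 | c1 <;> rcases le_or_gt a22 a21 with c2 | c2
        · -- A: K*H = K*g2 + K*g3 + K*g4 + (n-2)*X2 + (n-1)^2*X3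
          have q2 : 0 ≤ (n ^ 2 - n - 1) * ((n - 1) * ((a11 - a12) * ((n - 1) - z2))) :=
            mul_nonneg hK.le (mul_nonneg hn1 (mul_nonneg (by linarith) (by linarith)))
          have q3 : 0 ≤ (n ^ 2 - n - 1) * ((n - 2) * ((a21 - a22) * (n - z3))) :=
            mul_nonneg hK.le (mul_nonneg hn2 (mul_nonneg (by linarith) (by linarith)))
          have q4 : 0 ≤ (n ^ 2 - n - 1) * ((a21 - a22) * ((n - 1) - z4)) :=
            mul_nonneg hK.le (mul_nonneg (by linarith) (by linarith))
          have s2 : 0 < (n - 2) * ((a21 - a12) - (n ^ 2 - n - 1) * (a12 - a22)) :=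
            mul_pos (by linarith) (by linarith)
          have s3 : 0 < (n - 1) ^ 2 * ((a21 - a12) - (n ^ 2 - n - 1) * (a11 - a22)) :=
            mul_pos (by nlinarith) (by linarith)
          linarith [q2, q3, q4, s2, s3]
        · -- B: K*H = K*g2 + K*g3' + K*g4' + (n-1)^2*X1 + n(n-1)(n-2)*d
          have q2 : 0 ≤ (n ^ 2 - n - 1) * ((n - 1) * ((a11 - a12) * ((n - 1) - z2))) :=
            mul_nonneg hK.le (mul_nonneg hn1 (mul_nonneg (by linarith) (by linarith)))
          have q3 : 0 ≤ (n ^ 2 - n - 1) * ((n - 2) * ((a22 - a21) * z3)) :=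
            mul_nonneg hK.le (mul_nonneg hn2 (mul_nonneg (by linarith) p3))
          have q4 : 0 ≤ (n ^ 2 - n - 1) * ((a22 - a21) * z4) :=
            mul_nonneg hK.le (mul_nonneg (by linarith) p4)
          have s1 : 0 < (n - 1) ^ 2 * ((a21 - a12) - (n ^ 2 - n - 1) * (a11 - a21)) :=
            mul_pos (by nlinarith) (by linarith)
          have sd : 0 < n * (n - 1) * (n - 2) * (a21 - a12) :=
            mul_pos (mul_pos (mul_pos hn (by linarith)) (by linarith)) (by linarith)
          linarith [q2, q3, q4, s1, sd]
        · -- C: K*H = K*g2' + K*g3 + K*g4 + K*X2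
          have q2 : 0 ≤ (n ^ 2 - n - 1) * ((n - 1) * ((a12 - a11) * z2)) :=
            mul_nonneg hK.le (mul_nonneg hn1 (mul_nonneg (by linarith) p2))
          have q3 : 0 ≤ (n ^ 2 - n - 1) * ((n - 2) * ((a21 - a22) * (n - z3))) :=
            mul_nonneg hK.le (mul_nonneg hn2 (mul_nonneg (by linarith) (by linarith)))
          have q4 : 0 ≤ (n ^ 2 - n - 1) * ((a21 - a22) * ((n - 1) - z4)) :=
            mul_nonneg hK.le (mul_nonneg (by linarith) (by linarith))
          have s2 : 0 < (n ^ 2 - n - 1) * ((a21 - a12) - (n ^ 2 - n - 1) * (a12 - a22)) :=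
            mul_pos hK (by linarith)
          linarith [q2, q3, q4, s2]
        · -- D: K*H = K*g2' + K*g3' + K*g4' + K*n(n-1)*d
          have q2 : 0 ≤ (n ^ 2 - n - 1) * ((n - 1) * ((a12 - a11) * z2)) :=
            mul_nonneg hK.le (mul_nonneg hn1 (mul_nonneg (by linarith) p2))
          have q3 : 0 ≤ (n ^ 2 - n - 1) * ((n - 2) * ((a22 - a21) * z3)) :=
            mul_nonneg hK.le (mul_nonneg hn2 (mul_nonneg (by linarith) p3))
          have q4 : 0 ≤ (n ^ 2 - n - 1) * ((a22 - a21) * z4) :=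
            mul_nonneg hK.le (mul_nonneg (by linarith) p4)
          have sd : 0 < (n ^ 2 - n - 1) * (n * (n - 1) * (a21 - a12)) :=
            mul_pos hK (mul_pos (mul_pos hn (by linarith)) (by linarith))
          linarith [q2, q3, q4, sd]
      have hdiv : (n - 2) * ((a22 - a21) * z3 + a21 * n) + ((a22 - a21) * z4 + a21 * n) -
          (n - 1) * ((a11 - a12) * z2 + a12 * n) =
          (n ^ 2 - n - 1) * ((n - 2) * ((a22 - a21) * z3 + a21 * n) + ((a22 - a21) * z4 + a21 * n) -
          (n - 1) * ((a11 - a12) * z2 + a12 * n)) / (n ^ 2 - n - 1) := by rw [mul_div_cancel_left₀ _ hK.ne']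
      rw [hdiv]; exact div_pos hG hK
    have h5 : (n - 2) * ((a22 - a21) * z3 / n + a21) + ((a22 - a21) * z4 / n + a21) -
        (n - 1) * ((a11 - a12) * z2 / n + a12) =
        ((n - 2) * ((a22 - a21) * z3 + a21 * n) + ((a22 - a21) * z4 + a21 * n) -
        (n - 1) * ((a11 - a12) * z2 + a12 * n)) / n := by
      field_simp
    have h6 := div_pos hG2 hn
    rw [← h5] at h6
    linarith
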